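/- For every C ∈ (−1/√30, 1/√30), the cubic polynomial (10/9)t³ − (3/2)t + C has exactly one real root in the interval [−√(6/5), √(6/5)], and this root lies in the open interval (−3/(2√5), 3/(2√5)); moreover, for every C ∈ (1/√30, 3/√20) this polynomial has exactly two roots in [−√(6/5), √(6/5)]: one in (−3/(2√5), 3/(2√5)) and one in (3/(2√5), √(6/5)). -/

import Mathlib

set_option maxHeartbeats 1000000

open Set

/-- for `C ∈ (-1/√30, 1/√30)`, the cubic `(10/9)t³ - (3/2)t + C` has exactly one
root in `[-√(6/5), √(6/5)]`, lying in `(-3/(2√5), 3/(2√5))`; for `C ∈ (1/√30, 3/√20)` it has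
exactly two roots in `[-√(6/5), √(6/5)]`: one in `(-3/(2√5), 3/(2√5))` and one in
`(3/(2√5), √(6/5))`. -/
theorem stmt_15 :
    (∀ C ∈ Set.Ioo (-(1 / Real.sqrt 30)) (1 / Real.sqrt 30),
      (∃! t : ℝ, t ∈ Set.Icc (-Real.sqrt (6 / 5)) (Real.sqrt (6 / 5)) ∧
        (10 / 9) * t ^ 3 - (3 / 2) * t + C = 0) ∧
      (∀ t ∈ Set.Icc (-Real.sqrt (6 / 5)) (Real.sqrt (6 / 5)),
        (10 / 9) * t ^ 3 - (3 / 2) * t + C = 0 →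
        t ∈ Set.Ioo (-(3 / (2 * Real.sqrt 5))) (3 / (2 * Real.sqrt 5)))) ∧
    (∀ C ∈ Set.Ioo (1 / Real.sqrt 30) (3 / Real.sqrt 20),
      (∃! t : ℝ, t ∈ Set.Ioo (-(3 / (2 * Real.sqrt 5))) (3 / (2 * Real.sqrt 5)) ∧
        (10 / 9) * t ^ 3 - (3 / 2) * t + C = 0) ∧
      (∃! t : ℝ, t ∈ Set.Ioo (3 / (2 * Real.sqrt 5)) (Real.sqrt (6 / 5)) ∧
        (10 / 9) * t ^ 3 - (3 / 2) * t + C = 0) ∧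
      (∀ t ∈ Set.Icc (-Real.sqrt (6 / 5)) (Real.sqrt (6 / 5)),
        (10 / 9) * t ^ 3 - (3 / 2) * t + C = 0 →
        t ∈ Set.Ioo (-(3 / (2 * Real.sqrt 5))) (3 / (2 * Real.sqrt 5)) ∪
            Set.Ioo (3 / (2 * Real.sqrt 5)) (Real.sqrt (6 / 5)))) := by
  have h5 : (0:ℝ) < Real.sqrt 5 := Real.sqrt_pos.mpr (by norm_num)
  have h5sq : Real.sqrt 5 ^ 2 = 5 := Real.sq_sqrt (by norm_num)
  have h30 : (0:ℝ) < Real.sqrt 30 := Real.sqrt_pos.mpr (by norm_num)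
  have h30sq : Real.sqrt 30 ^ 2 = 30 := Real.sq_sqrt (by norm_num)
  set b : ℝ := 3 / (2 * Real.sqrt 5) with hbdef
  set c : ℝ := 1 / Real.sqrt 30 with hcdef
  set a : ℝ := Real.sqrt (6 / 5) with hadef
  have hb0 : 0 < b := by positivity
  have hc0 : 0 < c := by positivity
  have ha0 : 0 < a := Real.sqrt_pos.mpr (by norm_num)
  have hb2 : b ^ 2 = 9 / 20 := by
    rw [hbdef]; rw [div_pow]; rw [mul_pow]; rw [h5sq]; norm_num
  have hc2 : c ^ 2 = 1 / 30 := by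
    rw [hcdef]; rw [div_pow]; rw [h30sq]; norm_num
  have ha2 : a ^ 2 = 6 / 5 := Real.sq_sqrt (by norm_num)
  have h20 : (3:ℝ) / Real.sqrt 20 = b := by
    rw [hbdef, show (20:ℝ) = 2 ^ 2 * 5 by norm_num,
      Real.sqrt_mul (by positivity), Real.sqrt_sq (by norm_num)]
  have hac : a = 6 * c := by
    have h1 : (a - 6 * c) * (a + 6 * c) = 0 := by linear_combination ha2 - 36 * hc2
    rcases mul_eq_zero.mp h1 with h | h
    · linarith
    · nlinarith
  have hcb : c < b := by nlinarith
  have hba : b < a := by nlinarith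
  -- values at key points
  have hFb : ∀ C : ℝ, (10 / 9) * b ^ 3 - (3 / 2) * b + C = C - b := fun C => by
    linear_combination ((10:ℝ) / 9) * b * hb2
  have hFnb : ∀ C : ℝ, (10 / 9) * (-b) ^ 3 - (3 / 2) * (-b) + C = C + b := fun C => by
    linear_combination (-(10:ℝ) / 9) * b * hb2
  have hFa : ∀ C : ℝ, (10 / 9) * a ^ 3 - (3 / 2) * a + C = C - c := fun C => by
    linear_combination ((10:ℝ) / 9) * a * ha2 - (1/6) * hac
  have hFna : ∀ C : ℝ, (10 / 9) * (-a) ^ 3 - (3 / 2) * (-a) + C = C + c := fun C => by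
    linear_combination (-(10:ℝ) / 9) * a * ha2 + (1/6) * hac
  -- derivative and monotonicity
  have hder : ∀ C x : ℝ, HasDerivAt (fun t : ℝ => (10 / 9) * t ^ 3 - (3 / 2) * t + C)
      ((10 / 3) * x ^ 2 - 3 / 2) x := by
    intro C x
    have h := (((hasDerivAt_pow 3 x).const_mul ((10:ℝ) / 9)).sub
      ((hasDerivAt_id x).const_mul ((3:ℝ) / 2))).add_const C
    refine h.congr_deriv ?_
    push_cast; ring
  have cont : ∀ C : ℝ, Continuous (fun t : ℝ => (10 / 9) * t ^ 3 - (3 / 2) * t + C) :=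
    fun C => by continuity
  have anti : ∀ C : ℝ, StrictAntiOn (fun t : ℝ => (10 / 9) * t ^ 3 - (3 / 2) * t + C)
      (Icc (-b) b) := by
    intro C
    apply strictAntiOn_of_deriv_neg (convex_Icc _ _) (cont C).continuousOn
    intro x hx
    rw [interior_Icc] at hx
    rw [(hder C x).deriv]
    nlinarith [hb2, hb0, hx.1, hx.2]
  have mono : ∀ C : ℝ, StrictMonoOn (fun t : ℝ => (10 / 9) * t ^ 3 - (3 / 2) * t + C)
      (Ici b) := by
    intro C
    apply strictMonoOn_of_deriv_pos (convex_Ici _) (cont C).continuousOn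
    intro x hx
    rw [interior_Ici] at hx
    rw [(hder C x).deriv]
    have hbx : b < x := hx
    nlinarith [hb2, hb0, hbx]
  have mono' : ∀ C : ℝ, StrictMonoOn (fun t : ℝ => (10 / 9) * t ^ 3 - (3 / 2) * t + C)
      (Iic (-b)) := by
    intro C
    apply strictMonoOn_of_deriv_pos (convex_Iic _) (cont C).continuousOn
    intro x hx
    rw [interior_Iic] at hx
    have hbx : x < -b := hx
    rw [(hder C x).deriv]
    nlinarith [hb2, hb0, hbx]
  constructor
  · rintro C ⟨hC1, hC2⟩
    have s1 : 0 < (10 / 9) * (-a) ^ 3 - (3 / 2) * (-a) + C := by rw [hFna C]; linarith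
    have s2 : 0 < (10 / 9) * (-b) ^ 3 - (3 / 2) * (-b) + C := by rw [hFnb C]; linarith
    have s3 : (10 / 9) * b ^ 3 - (3 / 2) * b + C < 0 := by rw [hFb C]; linarith
    have s4 : (10 / 9) * a ^ 3 - (3 / 2) * a + C < 0 := by rw [hFa C]; linarith
    have loc : ∀ t ∈ Icc (-a) a, (10 / 9) * t ^ 3 - (3 / 2) * t + C = 0 →
        t ∈ Ioo (-b) b := by
      intro t ht h0
      rcases le_or_gt t (-b) with h | h
      · exfalso
        have hmem : t ∈ Iic (-b) := h
        have hle := (mono' C).monotoneOn (show -a ∈ Iic (-b) by simp; linarith) hmem ht.1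
        linarith
      · rcases lt_or_ge t b with h2 | h2
        · exact ⟨h, h2⟩
        · exfalso
          have hle := (mono C).monotoneOn (show t ∈ Ici b from h2)
            (show a ∈ Ici b from le_of_lt hba) ht.2
          linarith
    have hsub : Ioo (-b) b ⊆ Icc (-a) a := by
      intro x hx
      exact ⟨by linarith [hx.1], by linarith [hx.2]⟩
    obtain ⟨t, htmem, ht0⟩ := intermediate_value_Ioo' (show -b ≤ b by linarith)
      (cont C).continuousOn (show (0:ℝ) ∈ Ioo _ _ from ⟨s3, s2⟩)
    refine ⟨⟨t, ⟨hsub htmem, ht0⟩, ?_⟩, loc⟩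
    rintro y ⟨hy1, hy2⟩
    have hyloc := loc y hy1 hy2
    exact (anti C).injOn (Ioo_subset_Icc_self hyloc) (Ioo_subset_Icc_self htmem)
      (hy2.trans ht0.symm)
  · rintro C ⟨hC1, hC2⟩
    rw [h20] at hC2
    have s1 : 0 < (10 / 9) * (-a) ^ 3 - (3 / 2) * (-a) + C := by rw [hFna C]; linarith
    have s2 : 0 < (10 / 9) * (-b) ^ 3 - (3 / 2) * (-b) + C := by rw [hFnb C]; linarith
    have s3 : (10 / 9) * b ^ 3 - (3 / 2) * b + C < 0 := by rw [hFb C]; linarith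
    have s4 : 0 < (10 / 9) * a ^ 3 - (3 / 2) * a + C := by rw [hFa C]; linarith
    obtain ⟨t1, ht1mem, ht10⟩ := intermediate_value_Ioo' (show -b ≤ b by linarith)
      (cont C).continuousOn (show (0:ℝ) ∈ Ioo _ _ from ⟨s3, s2⟩)
    obtain ⟨t2, ht2mem, ht20⟩ := intermediate_value_Ioo (le_of_lt hba)
      (cont C).continuousOn (show (0:ℝ) ∈ Ioo _ _ from ⟨s3, s4⟩)
    refine ⟨⟨t1, ⟨ht1mem, ht10⟩, ?_⟩, ⟨t2, ⟨ht2mem, ht20⟩, ?_⟩, ?_⟩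
    · rintro y ⟨hy1, hy2⟩
      exact (anti C).injOn (Ioo_subset_Icc_self hy1) (Ioo_subset_Icc_self ht1mem)
        (hy2.trans ht10.symm)
    · rintro y ⟨hy1, hy2⟩
      exact (mono C).injOn (le_of_lt hy1.1) (le_of_lt ht2mem.1)
        (hy2.trans ht20.symm)
    · intro t ht h0
      rcases le_or_gt t (-b) with h | h
      · exfalso
        have hmem : t ∈ Iic (-b) := h
        have hle := (mono' C).monotoneOn (show -a ∈ Iic (-b) by simp; linarith) hmem ht.1
        linarith
      · rcases lt_or_ge t b with h2 | h2
        · exact Or.inl ⟨h, h2⟩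
        · rcases eq_or_lt_of_le h2 with he | h3
          · exfalso; rw [← he] at h0; linarith
          · rcases eq_or_lt_of_le ht.2 with he | h4
            · exfalso; rw [he] at h0; linarith
            · exact Or.inr ⟨h3, h4⟩
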